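/- If φ : ℝ^d → ℝ can be written as φ = φ₁ − φ₂ where φ₁, φ₂ : ℝ^d → ℝ are increasing with respect to the coordinatewise order, then φ is continuous at Lebesgue-almost every point of ℝ^d and is (Fréchet) differentiable at Lebesgue-almost every point of ℝ^d. -/

import Mathlib

open MeasureTheory Set Function

theorem mono_ae_continuousAt {d : ℕ} (f : (Fin d → ℝ) → ℝ) (hf : Monotone f) :
    ∀ᵐ x : (Fin d → ℝ) ∂volume, ContinuousAt f x := by
  have hnull : volume (⋃ q : ℚ, frontier {y : Fin d → ℝ | f y < (q : ℝ)}) = 0 := by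
    refine measure_iUnion_null fun q => ?_
    exact IsLowerSet.null_frontier fun a b hba ha => lt_of_le_of_lt (hf hba) ha
  have := (measure_eq_zero_iff_ae_notMem (μ := (volume : Measure (Fin d → ℝ)))).1 hnull
  filter_upwards [this] with x hx
  refine Metric.tendsto_nhds.2 fun ε hε => ?_
  obtain ⟨q, hq1, hq2⟩ := exists_rat_btwn (show f x < f x + ε by linarith)
  obtain ⟨p, hp1, hp2⟩ := exists_rat_btwn (show f x - ε < f x by linarith)
  have hxf : x ∉ frontier {y : Fin d → ℝ | f y < (q : ℝ)} :=
    fun h => hx (mem_iUnion.2 ⟨q, h⟩)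
  have hxp : x ∉ frontier {y : Fin d → ℝ | f y < (p : ℝ)} :=
    fun h => hx (mem_iUnion.2 ⟨p, h⟩)
  have hq3 : x ∈ interior {y : Fin d → ℝ | f y < (q : ℝ)} := by
    by_contra h
    exact hxf ⟨subset_closure hq1, h⟩
  have hp3 : x ∉ closure {y : Fin d → ℝ | f y < (p : ℝ)} := by
    intro h
    refine hxp ⟨h, fun h2 => ?_⟩
    exact absurd (interior_subset h2 : x ∈ {y : Fin d → ℝ | f y < (p : ℝ)}) (not_lt.2 hp2.le)
  have hopen : IsOpen (interior {y : Fin d → ℝ | f y < (q : ℝ)} ∩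
      (closure {y : Fin d → ℝ | f y < (p : ℝ)})ᶜ) :=
    isOpen_interior.inter isClosed_closure.isOpen_compl
  filter_upwards [hopen.mem_nhds ⟨hq3, hp3⟩] with y hy
  have h1 : y ∈ {y : Fin d → ℝ | f y < (q : ℝ)} := interior_subset hy.1
  rw [mem_setOf_eq] at h1
  have h2 : ¬ f y < (p : ℝ) := fun h => hy.2 (subset_closure h)
  push_neg at h2
  rw [Real.dist_eq, abs_sub_lt_iff]
  constructor <;> linarith

/-- The Minty-type transform of `f`. -/
noncomputable def minty {d : ℕ} (f : (Fin d → ℝ) → ℝ) : (Fin d → ℝ) → (Fin d → ℝ) :=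
  fun x i => x i + f x

theorem minty_dist {d : ℕ} {f : (Fin d → ℝ) → ℝ} (hf : Monotone f) (x y : Fin d → ℝ) :
    dist x y ≤ 2 * dist (minty f x) (minty f y) := by
  have key : ∀ x y : Fin d → ℝ, f x - f y ≤ dist (minty f x) (minty f y) := by
    intro x y
    by_contra h
    push_neg at h
    have hxy : x ≤ y := by
      rw [Pi.le_def]
      intro i
      have h1 : dist (minty f x i) (minty f y i) ≤ dist (minty f x) (minty f y) :=
        dist_le_pi_dist _ _ i
      rw [Real.dist_eq] at h1
      have h2 := (abs_le.1 h1).2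
      simp only [minty] at h2
      linarith
    have := hf hxy
    have h0 : (0:ℝ) ≤ dist (minty f x) (minty f y) := dist_nonneg
    linarith
  have h1 := key x y
  have h2 := key y x
  rw [dist_comm (minty f y)] at h2
  refine (dist_pi_le_iff (by positivity)).2 fun i => ?_
  have h3 : dist (minty f x i) (minty f y i) ≤ dist (minty f x) (minty f y) :=
    dist_le_pi_dist _ _ i
  rw [Real.dist_eq] at h3 ⊢
  have h4 := abs_le.1 h3
  simp only [minty] at h4
  rw [abs_le]
  constructor <;> [linarith [h4.1]; linarith [h4.2]]

theorem mono_ae_both {d : ℕ} (hd : 0 < d) (f : (Fin d → ℝ) → ℝ) (hf : Monotone f)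
    (hcont : ∀ᵐ x : (Fin d → ℝ) ∂volume, ContinuousAt f x) :
    ∀ᵐ x : (Fin d → ℝ) ∂volume, ContinuousAt f x ∧ DifferentiableAt ℝ f x := by
  -- injectivity of the Minty transform
  have hinj : Injective (minty f) := by
    intro x y h
    have := minty_dist hf x y
    rw [h, dist_self, mul_zero] at this
    exact dist_le_zero.1 this
  have hleftInv : ∀ x, invFun (minty f) (minty f x) = x := fun x =>
    leftInverse_invFun hinj x
  -- the inverse is 2-Lipschitz on the range
  have hlip : LipschitzOnWith 2 (invFun (minty f)) (range (minty f)) := by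
    rw [lipschitzOnWith_iff_dist_le_mul]
    rintro _ ⟨x, rfl⟩ _ ⟨y, rfl⟩
    rw [hleftInv x, hleftInv y]
    have := minty_dist hf x y
    simpa using this
  obtain ⟨Ψ, hΨlip, hΨeq⟩ := hlip.extend_pi
  have hleft : ∀ x, Ψ (minty f x) = x := fun x =>
    ((hΨeq (mem_range_self x)).symm).trans (hleftInv x)
  -- a Lipschitz map sends null sets to null sets
  have himg : ∀ s : Set (Fin d → ℝ), volume s = 0 → volume (Ψ '' s) = 0 := by
    intro s hs
    rw [← hausdorffMeasure_pi_real (ι := Fin d)] at hs ⊢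
    have := (hΨlip.lipschitzOnWith (s := s)).hausdorffMeasure_image_le
      (by positivity : (0:ℝ) ≤ (Fintype.card (Fin d) : ℝ))
    rw [hs, mul_zero] at this
    exact le_antisymm this zero_le
  -- Rademacher
  have hrad : volume {a : Fin d → ℝ | ¬ DifferentiableAt ℝ Ψ a} = 0 :=
    ae_iff.1 (hΨlip.ae_differentiableAt (μ := volume))
  -- Lipschitz Sard: image of the singular set is null
  set S : Set (Fin d → ℝ) :=
    {a | DifferentiableAt ℝ Ψ a ∧ (fderiv ℝ Ψ a).det = 0} with hSdef
  have hS : volume (Ψ '' S) = 0 := by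
    refine addHaar_image_eq_zero_of_det_fderivWithin_eq_zero volume
      (f' := fun a => fderiv ℝ Ψ a) (fun a ha => ha.1.hasFDerivAt.hasFDerivWithinAt)
      (fun a ha => ha.2)
  filter_upwards [hcont, (measure_eq_zero_iff_ae_notMem).1 (himg _ hrad),
    (measure_eq_zero_iff_ae_notMem).1 hS] with x hcx hx1 hx2
  refine ⟨hcx, ?_⟩
  have hdiffa : DifferentiableAt ℝ Ψ (minty f x) := by
    by_contra h
    exact hx1 ⟨minty f x, h, hleft x⟩
  have hdet : (fderiv ℝ Ψ (minty f x)).det ≠ 0 := by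
    intro h
    exact hx2 ⟨minty f x, ⟨hdiffa, h⟩, hleft x⟩
  set L := (fderiv ℝ Ψ (minty f x)).toContinuousLinearEquivOfDetNeZero hdet with hLdef
  have hΨat : HasFDerivAt Ψ (L : (Fin d → ℝ) →L[ℝ] (Fin d → ℝ)) (minty f x) := by
    rw [hLdef, ContinuousLinearMap.coe_toContinuousLinearEquivOfDetNeZero]
    exact hdiffa.hasFDerivAt
  have hΦcont : ContinuousAt (minty f) x := by
    refine continuousAt_pi.2 fun i => ?_
    exact (continuous_apply i).continuousAt.add hcx
  have hΦdiff : HasFDerivAt (minty f)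
      (L.symm : (Fin d → ℝ) →L[ℝ] (Fin d → ℝ)) x :=
    HasFDerivAt.of_local_left_inverse hΦcont hΨat
      (Filter.Eventually.of_forall hleft)
  obtain ⟨i₀⟩ : Nonempty (Fin d) := ⟨⟨0, hd⟩⟩
  have hfx : f = fun y => minty f y i₀ - y i₀ := funext fun y => by simp [minty]
  rw [hfx]
  have hproj : DifferentiableAt ℝ (fun y : Fin d → ℝ => y i₀) x :=
    (ContinuousLinearMap.proj (R := ℝ) (φ := fun _ : Fin d => ℝ) i₀).differentiableAt
  have hproj2 : DifferentiableAt ℝ (fun y : Fin d → ℝ => y i₀) (minty f x) :=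
    (ContinuousLinearMap.proj (R := ℝ) (φ := fun _ : Fin d => ℝ) i₀).differentiableAt
  exact ((hproj2.comp x hΦdiff.differentiableAt).sub hproj)


theorem monotone_ae_cont_diff {d : ℕ} (f : (Fin d → ℝ) → ℝ) (hf : Monotone f) :
    ∀ᵐ x : (Fin d → ℝ) ∂volume, ContinuousAt f x ∧ DifferentiableAt ℝ f x := by
  rcases Nat.eq_zero_or_pos d with rfl | hd
  · refine Filter.Eventually.of_forall fun x => ?_
    have hf0 : f = fun _ => f x := funext fun y => by rw [Subsingleton.elim y x]
    rw [hf0]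
    exact ⟨continuousAt_const, differentiableAt_const _⟩
  · exact mono_ae_both hd f hf (mono_ae_continuousAt f hf)

/-- If `φ : ℝ^d → ℝ` is the difference of two functions increasing with
respect to the coordinatewise order, then `φ` is continuous at Lebesgue-almost every
point of `ℝ^d` and (Fréchet) differentiable at Lebesgue-almost every point. -/
theorem stmt2 {d : ℕ} (φ φ₁ φ₂ : (Fin d → ℝ) → ℝ)
    (h₁ : Monotone φ₁) (h₂ : Monotone φ₂) (hφ : φ = φ₁ - φ₂) :
    ∀ᵐ x : (Fin d → ℝ) ∂volume, ContinuousAt φ x ∧ DifferentiableAt ℝ φ x := by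
  subst hφ
  filter_upwards [monotone_ae_cont_diff φ₁ h₁, monotone_ae_cont_diff φ₂ h₂] with x h1 h2
  have hsub : (φ₁ - φ₂) = fun y => φ₁ y - φ₂ y := rfl
  rw [hsub]
  exact ⟨h1.1.sub h2.1, h1.2.sub h2.2⟩
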